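/- Let n = 2^r with r ≥ 1, and let M be the sub-add matrix acting on (ℤ/2^rℤ)² by (a,b) ↦ (a−b, a+b). For every 0 ≤ i < 2r, if (a,b) ∈ P_i then its unique child (a−b, a+b) lies in P_{i+1}. For i = 2r, the lone vertex (0,0) ∈ P_{2r} is its own unique child. -/

import Mathlib

section aux
variable {r : ℕ}

noncomputable def pL {r : ℕ} (z : ZMod (2 ^ r)) : ZMod 2 := (z.val : ZMod 2)

lemma two_dvd_pow (hr : 1 ≤ r) : (2 : ℕ) ∣ 2 ^ r := dvd_pow_self 2 (by omega)

lemma pL_eq_castHom (hr : 1 ≤ r) (z : ZMod (2 ^ r)) :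
    pL z = ZMod.castHom (two_dvd_pow hr) (ZMod 2) z := by
  haveI : NeZero (2 ^ r) := ⟨by positivity⟩
  rw [pL, ZMod.castHom_apply, ZMod.natCast_val]

lemma pL_add (hr : 1 ≤ r) (a b : ZMod (2 ^ r)) : pL (a + b) = pL a + pL b := by
  simp only [pL_eq_castHom hr, map_add]

lemma pL_sub (hr : 1 ≤ r) (a b : ZMod (2 ^ r)) : pL (a - b) = pL a + pL b := by
  simp only [pL_eq_castHom hr, map_sub]
  rw [sub_eq_add_neg, CharTwo.neg_eq]

lemma odd_iff_pL (z : ZMod (2 ^ r)) : Odd z.val ↔ pL z = 1 := by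
  rw [Nat.odd_iff, pL, show (1 : ZMod 2) = ((1 : ℕ) : ZMod 2) by norm_num,
    ZMod.natCast_eq_natCast_iff']

lemma exists_half {z : ZMod (2 ^ r)} (h : pL z = 0) : ∃ u, z = 2 * u := by
  haveI : NeZero (2 ^ r) := ⟨by positivity⟩
  rw [pL, ZMod.natCast_eq_zero_iff] at h
  obtain ⟨k, hk⟩ := h
  refine ⟨(k : ZMod (2 ^ r)), ?_⟩
  have hz : ((z.val : ℕ) : ZMod (2 ^ r)) = z := by
    rw [ZMod.natCast_val, ZMod.cast_id]
  rw [← hz, hk]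
  push_cast
  ring

lemma xor_key (a b : ZMod 2) : Xor' (a = 1) (b = 1) ↔ a + b = 1 := by
  revert a b; unfold Xor'; decide

lemma two_pow_r_eq_zero : ((2 : ZMod (2 ^ r)) ^ r) = 0 := by
  have h : (((2 : ℕ) ^ r : ℕ) : ZMod (2 ^ r)) = 0 := ZMod.natCast_self _
  push_cast at h
  exact h

end aux


/-- The level sets `P_i` partitioning `(ℤ/2^rℤ)²`: for `0 ≤ t ≤ r-1`,
`P_{2t} = {(2^t x, 2^t y) : exactly one of x, y odd}` and
`P_{2t+1} = {(2^t x, 2^t y) : both x, y odd}`, and `P_{2r} = {(0,0)}`.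
Parity of an element of `ℤ/2^rℤ` is the parity of its canonical representative `val`. -/
def P (r i : ℕ) : Set (ZMod (2 ^ r) × ZMod (2 ^ r)) :=
  if i = 2 * r then {(0, 0)}
  else if Even i then
    {v | ∃ x y : ZMod (2 ^ r),
      v = ((2 : ZMod (2 ^ r)) ^ (i / 2) * x, (2 : ZMod (2 ^ r)) ^ (i / 2) * y) ∧
        Xor' (Odd x.val) (Odd y.val)}
  else
    {v | ∃ x y : ZMod (2 ^ r),
      v = ((2 : ZMod (2 ^ r)) ^ (i / 2) * x, (2 : ZMod (2 ^ r)) ^ (i / 2) * y) ∧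
        Odd x.val ∧ Odd y.val}

/-- under the sub-add map `(a,b) ↦ (a-b, a+b)` on `(ℤ/2^rℤ)²`, for every
`0 ≤ i < 2r` the unique child of a vertex of `P_i` lies in `P_{i+1}`; and the lone vertex
`(0,0) ∈ P_{2r}` is its own unique child. -/
theorem stmt6 (r : ℕ) (hr : 1 ≤ r) :
    (∀ i < 2 * r, ∀ a b : ZMod (2 ^ r), (a, b) ∈ P r i → (a - b, a + b) ∈ P r (i + 1)) ∧
    ((0 : ZMod (2 ^ r)) - 0, (0 : ZMod (2 ^ r)) + 0) = ((0 : ZMod (2 ^ r)), (0 : ZMod (2 ^ r))) := by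
  refine ⟨?_, by simp⟩
  intro i hi a b hab
  rcases Nat.even_or_odd i with he | ho
  · -- i even, i < 2r
    have hie : i % 2 = 0 := Nat.even_iff.mp he
    rw [P, if_neg (by omega), if_pos he, Set.mem_setOf_eq] at hab
    obtain ⟨x, y, hxy, hpar⟩ := hab
    rw [Prod.mk.injEq] at hxy
    obtain ⟨ha, hb⟩ := hxy
    rw [P, if_neg (by omega), if_neg (by simp [Nat.even_add_one, he]), Set.mem_setOf_eq]
    refine ⟨x - y, x + y, ?_, ?_⟩
    · rw [show (i + 1) / 2 = i / 2 by omega, Prod.mk.injEq]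
      constructor <;> (rw [ha, hb]; ring)
    · rw [odd_iff_pL, odd_iff_pL, pL_sub hr, pL_add hr]
      rw [odd_iff_pL, odd_iff_pL, xor_key] at hpar
      exact ⟨hpar, hpar⟩
  · -- i odd
    have hio : i % 2 = 1 := Nat.odd_iff.mp ho
    rw [P, if_neg (by omega), if_neg (by rwa [Nat.not_even_iff_odd]), Set.mem_setOf_eq] at hab
    obtain ⟨x, y, hxy, hx, hy⟩ := hab
    rw [Prod.mk.injEq] at hxy
    obtain ⟨ha, hb⟩ := hxy
    rw [odd_iff_pL] at hx hy
    have hsub : pL (x - y) = 0 := by rw [pL_sub hr, hx, hy]; decide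
    obtain ⟨u, hu⟩ := exists_half hsub
    set t := i / 2 with ht
    have hchild1 : a - b = 2 ^ (t + 1) * u := by
      rw [ha, hb]; linear_combination ((2 : ZMod (2 ^ r)) ^ t) * hu
    have hchild2 : a + b = 2 ^ (t + 1) * (x - u) := by
      rw [ha, hb]; linear_combination (-(2 : ZMod (2 ^ r)) ^ t) * hu
    by_cases hlast : i + 1 = 2 * r
    · -- t + 1 = r
      have htr : t + 1 = r := by omega
      rw [P, if_pos hlast]
      have hz : ((2 : ZMod (2 ^ r)) ^ (t + 1)) = 0 := by rw [htr]; exact two_pow_r_eq_zero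
      simp only [Set.mem_singleton_iff, Prod.mk.injEq, hchild1, hchild2, hz, zero_mul,
        and_self]
    · rw [P, if_neg hlast, if_pos (by simp [Nat.even_add_one, Nat.not_even_iff_odd, ho]),
        Set.mem_setOf_eq]
      refine ⟨u, x - u, ?_, ?_⟩
      · rw [show (i + 1) / 2 = t + 1 by omega, Prod.mk.injEq]
        exact ⟨hchild1, hchild2⟩
      · rw [odd_iff_pL, odd_iff_pL, xor_key, ← pL_add hr]
        rw [show u + (x - u) = x by ring]
        exact hx
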